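/- For any continuous functions k₁, k₂ : ℝ → ℝ there exist differentiable maps A, B, C : ℝ → ℝ³ satisfying A′(s) = k₁(s)C(s), B′(s) = k₂(s)C(s), C′(s) = −k₂(s)A(s) − k₁(s)B(s) for all s ∈ ℝ, with initial values A(0) = (−1/√2, 1/√2, 0), B(0) = (1/√2, 1/√2, 0), C(0) = (0,0,1), and such that the triple (A(s), B(s), C(s)) satisfies the null-frame pairing conditions for every s ∈ ℝ. -/

import Mathlib

open Set Filter intervalIntegral Topology

noncomputable section

/-- The Minkowski bilinear form on `ℝ³`. -/
def eta (x y : Fin 3 → ℝ) : ℝ := -(x 0 * y 0) + x 1 * y 1 + x 2 * y 2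

/-- The null-frame pairing conditions for a triple of vectors in `ℝ³`. -/
def NullFrame (A B C : Fin 3 → ℝ) : Prop :=
  eta A B = 1 ∧ eta C C = 1 ∧
  eta A A = 0 ∧ eta B B = 0 ∧ eta A C = 0 ∧ eta B C = 0

theorem key_int' {E : Type*} [NormedAddCommGroup E] [NormedSpace ℝ E]
    (h : ℝ → E) (hc : Continuous h) (c : ℝ) (n : ℕ) (t : ℝ)
    (hb : ∀ τ ∈ Set.uIcc (0:ℝ) t, ‖h τ‖ ≤ c * |τ| ^ n) :
    ‖∫ τ in (0:ℝ)..t, h τ‖ ≤ c * |t| ^ (n + 1) / (n + 1) := by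
  rcases le_total (0:ℝ) t with ht | ht
  · have hsub : Set.Icc (0:ℝ) t ⊆ Set.uIcc 0 t := by rw [Set.uIcc_of_le ht]
    calc ‖∫ τ in (0:ℝ)..t, h τ‖ ≤ ∫ τ in (0:ℝ)..t, ‖h τ‖ :=
          intervalIntegral.norm_integral_le_integral_norm ht
      _ ≤ ∫ τ in (0:ℝ)..t, c * τ ^ n := by
          apply intervalIntegral.integral_mono_on ht
            (hc.norm.intervalIntegrable _ _)
            ((continuous_const.mul (continuous_pow n)).intervalIntegrable _ _)
          intro τ hτ
          have := hb τ (hsub hτ)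
          rwa [abs_of_nonneg hτ.1] at this
      _ = c * (t ^ (n+1) - 0 ^ (n+1)) / (n+1) := by
          rw [intervalIntegral.integral_const_mul, integral_pow]; ring
      _ = c * |t| ^ (n + 1) / (n + 1) := by rw [abs_of_nonneg ht]; ring
  · have hsub : Set.Icc t (0:ℝ) ⊆ Set.uIcc 0 t := by rw [Set.uIcc_of_ge ht]
    have h1 : ‖∫ τ in (0:ℝ)..t, h τ‖ = ‖∫ τ in t..(0:ℝ), h τ‖ := by
      rw [intervalIntegral.integral_symm, norm_neg]
    rw [h1]
    calc ‖∫ τ in t..(0:ℝ), h τ‖ ≤ ∫ τ in t..(0:ℝ), ‖h τ‖ :=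
          intervalIntegral.norm_integral_le_integral_norm ht
      _ ≤ ∫ τ in t..(0:ℝ), c * (-τ) ^ n := by
          apply intervalIntegral.integral_mono_on ht
            (hc.norm.intervalIntegrable _ _)
            ((continuous_const.mul ((continuous_id.neg).pow n)).intervalIntegrable _ _)
          intro τ hτ
          have := hb τ (hsub hτ)
          rwa [abs_of_nonpos hτ.2] at this
      _ = c * ∫ τ in t..(0:ℝ), (-τ) ^ n := intervalIntegral.integral_const_mul _ _
      _ = c * ∫ τ in (0:ℝ)..(-t), τ ^ n := by
          congr 1
          have := intervalIntegral.integral_comp_neg (a := t) (b := (0:ℝ)) (fun τ => τ ^ n)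
          simpa using this
      _ = c * (((-t) ^ (n+1) - 0 ^ (n+1)) / (n+1)) := by rw [integral_pow]
      _ = c * |t| ^ (n + 1) / (n + 1) := by rw [abs_of_nonpos ht]; ring

theorem exists_global_linear_ode' {E : Type*} [NormedAddCommGroup E] [NormedSpace ℝ E]
    [CompleteSpace E] (L : ℝ → E →L[ℝ] E) (hL : Continuous L) (x₀ : E) :
    ∃ x : ℝ → E, x 0 = x₀ ∧ Continuous x ∧ ∀ t, HasDerivAt x (L t (x t)) t := by
  have hLapp : Continuous fun p : ℝ × E => L p.1 p.2 :=
    isBoundedBilinearMap_apply.continuous.comp ((hL.comp continuous_fst).prodMk continuous_snd)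
  set u : ℕ → ℝ → E :=
    fun n => Nat.rec (fun _ => x₀) (fun _ un t => ∫ τ in (0:ℝ)..t, L τ (un τ)) n with hu
  have huS : ∀ n t, u (n+1) t = ∫ τ in (0:ℝ)..t, L τ (u n τ) := fun n t => rfl
  have hucont : ∀ n, Continuous (u n) := by
    intro n; induction n with
    | zero => exact continuous_const
    | succ n ih =>
      have hci : Continuous fun τ => L τ (u n τ) := hLapp.comp (continuous_id.prodMk ih)
      exact continuous_iff_continuousAt.2 fun t =>
        ((hci.integral_hasStrictDerivAt 0 t).hasDerivAt.continuousAt)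
  -- uniform bounds on compact intervals
  have hbound : ∀ (T K : ℝ), 0 ≤ K → (∀ τ ∈ Set.Icc (-T) T, ‖L τ‖ ≤ K) →
      ∀ n, ∀ t ∈ Set.Icc (-T) T, ‖u n t‖ ≤ ‖x₀‖ * (K * |t|) ^ n / n.factorial := by
    intro T K hK hKb n
    induction n with
    | zero =>
      intro t ht
      have : u 0 t = x₀ := rfl
      rw [this]; simp
    | succ n ih =>
      intro t ht
      have hT0 : (0:ℝ) ≤ T := by
        rcases ht with ⟨h1, h2⟩; linarith
      have hsub : Set.uIcc (0:ℝ) t ⊆ Set.Icc (-T) T :=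
        Set.uIcc_subset_Icc ⟨by linarith, hT0⟩ ht
      have hci : Continuous fun τ => L τ (u n τ) := hLapp.comp (continuous_id.prodMk (hucont n))
      have hkey := key_int' (fun τ => L τ (u n τ)) hci
        (K ^ (n+1) * ‖x₀‖ / n.factorial) n t ?_
      · rw [huS]
        refine hkey.trans_eq ?_
        rw [Nat.factorial_succ]
        push_cast
        rw [mul_pow]
        field_simp
      · intro τ hτ
        have hτ' := hsub hτ
        calc ‖L τ (u n τ)‖ ≤ ‖L τ‖ * ‖u n τ‖ := (L τ).le_opNorm _
          _ ≤ K * (‖x₀‖ * (K * |τ|) ^ n / n.factorial) := by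
              apply mul_le_mul (hKb τ hτ') (ih τ hτ') (norm_nonneg _) hK
          _ = K ^ (n+1) * ‖x₀‖ / n.factorial * |τ| ^ n := by
              rw [mul_pow]; field_simp; ring
  -- summable majorant on compact intervals
  have key : ∀ T : ℝ, 0 < T → ∃ M : ℕ → ℝ, Summable M ∧
      (∀ n, ∀ t ∈ Set.Icc (-T) T, ‖u n t‖ ≤ M n) := by
    intro T hT
    obtain ⟨K₀, hK₀⟩ := (isCompact_Icc (a := -T) (b := T)).exists_bound_of_continuousOn
      hL.continuousOn
    set K := max K₀ 0 with hKdef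
    have hK : 0 ≤ K := le_max_right _ _
    have hKb : ∀ τ ∈ Set.Icc (-T) T, ‖L τ‖ ≤ K := fun τ hτ => (hK₀ τ hτ).trans (le_max_left _ _)
    refine ⟨fun n => ‖x₀‖ * ((K * T) ^ n / n.factorial), (Real.summable_pow_div_factorial (K * T)).mul_left _, ?_⟩
    intro n t ht
    refine (hbound T K hK hKb n t ht).trans ?_
    rw [mul_div_assoc]
    apply mul_le_mul_of_nonneg_left _ (norm_nonneg _)
    apply (div_le_div_iff_of_pos_right (by positivity : (0:ℝ) < n.factorial)).2
    apply pow_le_pow_left₀ (by positivity)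
    exact mul_le_mul_of_nonneg_left (abs_le.2 ⟨ht.1, ht.2⟩) hK
  have hmem : ∀ t : ℝ, t ∈ Set.Icc (-(|t|+1)) (|t|+1) := fun t =>
    ⟨by linarith [neg_abs_le t], by linarith [le_abs_self t]⟩
  have hsummable : ∀ t, Summable fun n => u n t := by
    intro t
    obtain ⟨M, hM, hMb⟩ := key (|t|+1) (by positivity)
    exact Summable.of_norm_bounded hM fun n => hMb n t (hmem t)
  set x : ℝ → E := fun t => ∑' n, u n t with hx
  set S : ℕ → ℝ → E := fun n t => ∑ k ∈ Finset.range n, u k t with hSdef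
  have hS_tendsto : ∀ t, Tendsto (fun n => S n t) atTop (𝓝 (x t)) := fun t =>
    (hsummable t).hasSum.tendsto_sum_nat
  have hx_cont : Continuous x := by
    rw [continuous_iff_continuousAt]; intro t
    obtain ⟨M, hM, hMb⟩ := key (|t|+1) (by positivity)
    have hTU := tendstoUniformlyOn_tsum hM (fun n τ hτ => hMb n τ hτ)
      (s := Set.Icc (-(|t|+1)) (|t|+1))
    have hcm : ContinuousOn x (Set.Icc (-(|t|+1)) (|t|+1)) :=
      hTU.continuousOn (Filter.Eventually.of_forall fun n =>
        (continuous_finset_sum _ fun k _ => hucont k).continuousOn).frequently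
    exact hcm.continuousAt (Icc_mem_nhds (by linarith [neg_abs_le t]) (by linarith [le_abs_self t]))
  have hxeq : ∀ t, x t = x₀ + ∫ τ in (0:ℝ)..t, L τ (x τ) := by
    intro t
    set T := |t| + 1 with hTdef
    have hT : (0:ℝ) < T := by positivity
    obtain ⟨M, hM, hMb⟩ := key T hT
    obtain ⟨K₀, hK₀⟩ := (isCompact_Icc (a := -T) (b := T)).exists_bound_of_continuousOn
      hL.continuousOn
    set K := max K₀ 0 with hKdef
    have hK : 0 ≤ K := le_max_right _ _
    have hKb : ∀ τ ∈ Set.Icc (-T) T, ‖L τ‖ ≤ K := fun τ hτ => (hK₀ τ hτ).trans (le_max_left _ _)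
    have htail : ∀ n, ∀ τ ∈ Set.Icc (-T) T, ‖x τ - S n τ‖ ≤ ∑' k, M (k + n) := by
      intro n τ hτ
      have hsum1 : Summable fun k => u (k + n) τ := ((summable_nat_add_iff n).2 (hsummable τ))
      have h1 : x τ - S n τ = ∑' k, u (k + n) τ := by
        have h2 := Summable.sum_add_tsum_nat_add n (hsummable τ)
        exact sub_eq_iff_eq_add'.mpr h2.symm
      rw [h1]
      have hnsum : Summable fun k => ‖u (k + n) τ‖ :=
        Summable.of_nonneg_of_le (fun _ => norm_nonneg _) (fun k => hMb _ τ hτ)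
          ((summable_nat_add_iff n).2 hM)
      refine (norm_tsum_le_tsum_norm hnsum).trans ?_
      exact Summable.tsum_le_tsum (fun k => hMb _ τ hτ) hnsum ((summable_nat_add_iff n).2 hM)
    have htail0 : Tendsto (fun n => ∑' k, M (k + n)) atTop (𝓝 0) := by
      have hps := hM.hasSum.tendsto_sum_nat
      have heq : ∀ n : ℕ, ∑' k, M (k + n) = (∑' k, M k) - ∑ i ∈ Finset.range n, M i := by
        intro n
        have := Summable.sum_add_tsum_nat_add n hM
        linarith
      simp_rw [heq]
      have h8 : Tendsto (fun n => (∑' k, M k) - ∑ i ∈ Finset.range n, M i) atTop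
          (𝓝 ((∑' k, M k) - ∑' k, M k)) := (tendsto_const_nhds (x := ∑' k, M k)).sub hps
      simpa using h8
    have hSrec : ∀ n, S (n+1) t = x₀ + ∫ τ in (0:ℝ)..t, L τ (S n τ) := by
      intro n
      have h1 : S (n+1) t = (∑ k ∈ Finset.range n, u (k+1) t) + u 0 t :=
        Finset.sum_range_succ' _ n
      have h2 : (∑ k ∈ Finset.range n, u (k+1) t)
          = ∫ τ in (0:ℝ)..t, ∑ k ∈ Finset.range n, L τ (u k τ) := by
        rw [intervalIntegral.integral_finset_sum]
        intro k _
        exact (hLapp.comp (continuous_id.prodMk (hucont k))).intervalIntegrable _ _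
      have h3 : (fun τ => ∑ k ∈ Finset.range n, L τ (u k τ)) = fun τ => L τ (S n τ) := by
        funext τ
        rw [hSdef]
        exact (map_sum (L τ) (fun k => u k τ) (Finset.range n)).symm
      rw [h1, h2, h3]
      exact add_comm _ _
    have hxint : Continuous fun τ => L τ (x τ) := hLapp.comp (continuous_id.prodMk hx_cont)
    have hlim1 : Tendsto (fun n => S (n+1) t) atTop (𝓝 (x t)) :=
      (hS_tendsto t).comp (tendsto_add_atTop_nat 1)
    have hlim2 : Tendsto (fun n => S (n+1) t) atTop
        (𝓝 (x₀ + ∫ τ in (0:ℝ)..t, L τ (x τ))) := by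
      rw [tendsto_iff_dist_tendsto_zero]
      have hdiff : ∀ n, dist (S (n+1) t) (x₀ + ∫ τ in (0:ℝ)..t, L τ (x τ))
          ≤ (K * ∑' k, M (k + n)) * |t - 0| := by
        intro n
        rw [hSrec n, dist_eq_norm]
        have hScont : Continuous (S n) := continuous_finset_sum _ fun k _ => hucont k
        have hSint : Continuous fun τ => L τ (S n τ) :=
          hLapp.comp (continuous_id.prodMk hScont)
        have h4 : (x₀ + ∫ τ in (0:ℝ)..t, L τ (S n τ)) - (x₀ + ∫ τ in (0:ℝ)..t, L τ (x τ))
            = ∫ τ in (0:ℝ)..t, (L τ (S n τ) - L τ (x τ)) := by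
          rw [intervalIntegral.integral_sub (hSint.intervalIntegrable _ _)
            (hxint.intervalIntegrable _ _)]
          abel
        rw [h4]
        apply intervalIntegral.norm_integral_le_of_norm_le_const
        intro τ hτ
        have hτ' : τ ∈ Set.Icc (-T) T := by
          have h5 : Set.uIoc (0:ℝ) t ⊆ Set.uIcc (0:ℝ) t := Set.Ioc_subset_Icc_self
          have h6 : Set.uIcc (0:ℝ) t ⊆ Set.Icc (-T) T :=
            Set.uIcc_subset_Icc ⟨by linarith, by linarith⟩ (hmem t)
          exact h6 (h5 hτ)
        calc ‖L τ (S n τ) - L τ (x τ)‖ = ‖L τ (S n τ - x τ)‖ := by rw [map_sub]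
          _ ≤ ‖L τ‖ * ‖S n τ - x τ‖ := (L τ).le_opNorm _
          _ ≤ K * ∑' k, M (k + n) := by
              apply mul_le_mul (hKb τ hτ') ?_ (norm_nonneg _) hK
              rw [← norm_neg, neg_sub]
              exact htail n τ hτ'
      apply squeeze_zero (fun n => dist_nonneg) hdiff
      have : Tendsto (fun n => (K * ∑' k, M (k + n)) * |t - 0|) atTop
          (𝓝 ((K * 0) * |t - 0|)) :=
        (tendsto_const_nhds.mul htail0).mul tendsto_const_nhds
      simpa using this
    exact tendsto_nhds_unique hlim1 hlim2
  have hxint : Continuous fun τ => L τ (x τ) := hLapp.comp (continuous_id.prodMk hx_cont)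
  have hxd : ∀ t, HasDerivAt x (L t (x t)) t := by
    intro t
    have h1 : HasDerivAt (fun s => x₀ + ∫ τ in (0:ℝ)..s, L τ (x τ)) (L t (x t)) t :=
      ((hxint.integral_hasStrictDerivAt 0 t).hasDerivAt).const_add x₀
    exact h1.congr_of_eventuallyEq (Filter.Eventually.of_forall fun s => hxeq s)
  refine ⟨x, ?_, hx_cont, hxd⟩
  rw [hxeq 0]
  simp

theorem linear_ode_eq_zero' {E : Type*} [NormedAddCommGroup E] [NormedSpace ℝ E]
    (N : ℝ → E →L[ℝ] E) (hN : Continuous N) (y : ℝ → E)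
    (hy : ∀ t, HasDerivAt y (N t (y t)) t) (h0 : y 0 = 0) : ∀ t, y t = 0 := by
  intro t
  set T := |t| + 1 with hTdef
  have hT1 : (1:ℝ) ≤ T := by have := abs_nonneg t; linarith
  have hclamp : ∀ s : ℝ, max (-T) (min T s) ∈ Set.Icc (-T) T :=
    fun s => ⟨le_max_left _ _, max_le (by linarith) (min_le_left _ _)⟩
  obtain ⟨K₀, hK₀⟩ := (isCompact_Icc (a := -T) (b := T)).exists_bound_of_continuousOn
    hN.continuousOn
  set K : NNReal := ⟨max K₀ 0, le_max_right _ _⟩ with hKdef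
  set v : ℝ → E → E := fun s z => N (max (-T) (min T s)) z with hvdef
  have hlip : ∀ s, LipschitzOnWith K (v s) Set.univ := by
    intro s
    apply LipschitzWith.lipschitzOnWith
    apply (N (max (-T) (min T s))).lipschitz.weaken
    rw [← NNReal.coe_le_coe]
    exact (hK₀ _ (hclamp s)).trans (le_max_left _ _)
  have hmem : ∀ s ∈ Set.Ioo (-T) T, max (-T) (min T s) = s := by
    intro s hs
    rw [min_eq_right hs.2.le, max_eq_right hs.1.le]
  have key := ODE_solution_unique_of_mem_Ioo (v := v) (s := fun _ => Set.univ) (fun s _ => hlip s)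
    (t₀ := 0) (a := -T) (b := T) (f := y) (g := fun _ => 0)
    ⟨by linarith, by linarith⟩
    (fun s hs => ⟨by rw [hvdef]; simp only [hmem s hs]; exact hy s, trivial⟩)
    (fun s hs => ⟨by
      have hz : v s 0 = 0 := (N _).map_zero
      rw [hz]
      exact hasDerivAt_const s (0:E), trivial⟩)
    h0
  exact key ⟨by have := neg_abs_le t; linarith, by have := le_abs_self t; linarith⟩

theorem vec6_four {α : Type*} (a b c d e f : α) : ![a,b,c,d,e,f] 4 = e := rfl

theorem vec6_five {α : Type*} (a b c d e f : α) : ![a,b,c,d,e,f] 5 = f := rfl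

/-- Existence of a solution to the frame ODE system. -/
theorem frame_system_exists (k₁ k₂ : ℝ → ℝ) (hk₁ : Continuous k₁) (hk₂ : Continuous k₂)
    (x₀ : (Fin 3 → ℝ) × (Fin 3 → ℝ) × (Fin 3 → ℝ)) :
    ∃ x : ℝ → (Fin 3 → ℝ) × (Fin 3 → ℝ) × (Fin 3 → ℝ), x 0 = x₀ ∧
      ∀ t, HasDerivAt x
        (k₁ t • (x t).2.2, k₂ t • (x t).2.2,
          (-(k₂ t)) • (x t).1 + (-(k₁ t)) • (x t).2.1) t := by
  let q : ((Fin 3 → ℝ) × (Fin 3 → ℝ) × (Fin 3 → ℝ)) →L[ℝ] ((Fin 3 → ℝ) × (Fin 3 → ℝ)) :=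
    ContinuousLinearMap.snd ℝ _ _
  let p₁ : ((Fin 3 → ℝ) × (Fin 3 → ℝ) × (Fin 3 → ℝ)) →L[ℝ] (Fin 3 → ℝ) :=
    ContinuousLinearMap.fst ℝ _ _
  let p₂ : ((Fin 3 → ℝ) × (Fin 3 → ℝ) × (Fin 3 → ℝ)) →L[ℝ] (Fin 3 → ℝ) :=
    (ContinuousLinearMap.fst ℝ _ _).comp q
  let p₃ : ((Fin 3 → ℝ) × (Fin 3 → ℝ) × (Fin 3 → ℝ)) →L[ℝ] (Fin 3 → ℝ) :=
    (ContinuousLinearMap.snd ℝ _ _).comp q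
  let M₁ : ((Fin 3 → ℝ) × (Fin 3 → ℝ) × (Fin 3 → ℝ)) →L[ℝ]
      ((Fin 3 → ℝ) × (Fin 3 → ℝ) × (Fin 3 → ℝ)) :=
    p₃.prod ((0 : _ →L[ℝ] (Fin 3 → ℝ)).prod (-p₂))
  let M₂ : ((Fin 3 → ℝ) × (Fin 3 → ℝ) × (Fin 3 → ℝ)) →L[ℝ]
      ((Fin 3 → ℝ) × (Fin 3 → ℝ) × (Fin 3 → ℝ)) :=
    (0 : _ →L[ℝ] (Fin 3 → ℝ)).prod (p₃.prod (-p₁))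
  obtain ⟨x, hx0, _, hxd⟩ := exists_global_linear_ode'
    (fun t => k₁ t • M₁ + k₂ t • M₂)
    ((hk₁.smul continuous_const).add (hk₂.smul continuous_const)) x₀
  refine ⟨x, hx0, fun t => ?_⟩
  have h := hxd t
  have happ : (k₁ t • M₁ + k₂ t • M₂) (x t)
      = (k₁ t • (x t).2.2, k₂ t • (x t).2.2,
          (-(k₂ t)) • (x t).1 + (-(k₁ t)) • (x t).2.1) := by
    have h1 : M₁ (x t) = ((x t).2.2, (0, -(x t).2.1)) := rfl
    have h2 : M₂ (x t) = (0, ((x t).2.2, -(x t).1)) := rfl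
    show k₁ t • (M₁ (x t)) + k₂ t • (M₂ (x t)) = _
    rw [h1, h2]
    refine Prod.ext ?_ (Prod.ext ?_ ?_) <;> simp <;> module
  rwa [happ] at h
/-- Uniqueness (vanishing) for the pairing ODE system. -/
theorem pair_system_zero (k₁ k₂ : ℝ → ℝ) (hk₁ : Continuous k₁) (hk₂ : Continuous k₂)
    (y : ℝ → Fin 6 → ℝ)
    (hy : ∀ t, HasDerivAt y
      ![k₁ t * y t 5 + k₂ t * y t 4,
        -(2 * k₂ t * y t 4) - 2 * k₁ t * y t 5,
        2 * k₁ t * y t 4,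
        2 * k₂ t * y t 5,
        k₁ t * y t 1 - k₂ t * y t 2 - k₁ t * y t 0,
        k₂ t * y t 1 - k₂ t * y t 0 - k₁ t * y t 3] t)
    (h0 : y 0 = 0) : ∀ t, y t = 0 := by
  let pr : Fin 6 → ((Fin 6 → ℝ) →L[ℝ] ℝ) := fun i => ContinuousLinearMap.proj i
  let N₁ : (Fin 6 → ℝ) →L[ℝ] (Fin 6 → ℝ) :=
    ContinuousLinearMap.pi ![pr 5, (-2:ℝ) • pr 5, (2:ℝ) • pr 4, 0, pr 1 - pr 0, -(pr 3)]
  let N₂ : (Fin 6 → ℝ) →L[ℝ] (Fin 6 → ℝ) :=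
    ContinuousLinearMap.pi ![pr 4, (-2:ℝ) • pr 4, 0, (2:ℝ) • pr 5, -(pr 2), pr 1 - pr 0]
  apply linear_ode_eq_zero' (fun t => k₁ t • N₁ + k₂ t • N₂)
    ((hk₁.smul continuous_const).add (hk₂.smul continuous_const)) y _ h0
  intro t
  have happ : (k₁ t • N₁ + k₂ t • N₂) (y t) =
      ![k₁ t * y t 5 + k₂ t * y t 4,
        -(2 * k₂ t * y t 4) - 2 * k₁ t * y t 5,
        2 * k₁ t * y t 4,
        2 * k₂ t * y t 5,
        k₁ t * y t 1 - k₂ t * y t 2 - k₁ t * y t 0,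
        k₂ t * y t 1 - k₂ t * y t 0 - k₁ t * y t 3] := by
    funext i
    have h1 : (k₁ t • N₁ + k₂ t • N₂) (y t) i = k₁ t * (N₁ (y t) i) + k₂ t * (N₂ (y t) i) := by
      simp
    rw [h1]
    fin_cases i <;>
      simp [N₁, N₂, pr, ContinuousLinearMap.pi_apply, Matrix.cons_val_zero,
        Matrix.cons_val_one, Matrix.head_cons, Matrix.cons_val_two, Matrix.cons_val_three,
        Matrix.cons_val_four, vec6_four, vec6_five, Matrix.vecTail, Matrix.vecHead,
        ContinuousLinearMap.sub_apply, ContinuousLinearMap.smul_apply,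
        ContinuousLinearMap.neg_apply, ContinuousLinearMap.proj_apply,
        ContinuousLinearMap.zero_apply] <;> ring
  rw [happ]
  exact hy t

theorem exists_nullFrame_with_curvatures (k₁ k₂ : ℝ → ℝ)
    (hk₁ : Continuous k₁) (hk₂ : Continuous k₂) :
    ∃ A B C : ℝ → Fin 3 → ℝ,
      Differentiable ℝ A ∧ Differentiable ℝ B ∧ Differentiable ℝ C ∧
      (∀ s, deriv A s = k₁ s • C s) ∧
      (∀ s, deriv B s = k₂ s • C s) ∧
      (∀ s, deriv C s = (-(k₂ s)) • A s + (-(k₁ s)) • B s) ∧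
      A 0 = ![-(1 / Real.sqrt 2), 1 / Real.sqrt 2, 0] ∧
      B 0 = ![1 / Real.sqrt 2, 1 / Real.sqrt 2, 0] ∧
      C 0 = ![0, 0, 1] ∧
      ∀ s, NullFrame (A s) (B s) (C s) := by
  obtain ⟨x, hx0, hxd⟩ := frame_system_exists k₁ k₂ hk₁ hk₂
    (![-(1 / Real.sqrt 2), 1 / Real.sqrt 2, 0], ![1 / Real.sqrt 2, 1 / Real.sqrt 2, 0],
      ![0, 0, 1])
  have hA : ∀ s, HasDerivAt (fun s => (x s).1) (k₁ s • (x s).2.2) s := by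
    intro s
    exact (ContinuousLinearMap.fst ℝ (Fin 3 → ℝ)
      ((Fin 3 → ℝ) × (Fin 3 → ℝ))).hasFDerivAt.comp_hasDerivAt s (hxd s)
  have hB : ∀ s, HasDerivAt (fun s => (x s).2.1) (k₂ s • (x s).2.2) s := by
    intro s
    exact ((ContinuousLinearMap.fst ℝ (Fin 3 → ℝ) (Fin 3 → ℝ)).comp
      (ContinuousLinearMap.snd ℝ (Fin 3 → ℝ)
        ((Fin 3 → ℝ) × (Fin 3 → ℝ)))).hasFDerivAt.comp_hasDerivAt s (hxd s)
  have hC : ∀ s, HasDerivAt (fun s => (x s).2.2)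
      ((-(k₂ s)) • (x s).1 + (-(k₁ s)) • (x s).2.1) s := by
    intro s
    exact ((ContinuousLinearMap.snd ℝ (Fin 3 → ℝ) (Fin 3 → ℝ)).comp
      (ContinuousLinearMap.snd ℝ (Fin 3 → ℝ)
        ((Fin 3 → ℝ) × (Fin 3 → ℝ)))).hasFDerivAt.comp_hasDerivAt s (hxd s)
  have hA' : ∀ (s : ℝ) (i : Fin 3), HasDerivAt (fun s => (x s).1 i) (k₁ s * (x s).2.2 i) s := by
    intro s i
    have h := (ContinuousLinearMap.proj (R := ℝ) (φ := fun _ : Fin 3 => ℝ)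
      i).hasFDerivAt.comp_hasDerivAt s (hA s)
    simp at h; exact h
  have hB' : ∀ (s : ℝ) (i : Fin 3), HasDerivAt (fun s => (x s).2.1 i) (k₂ s * (x s).2.2 i) s := by
    intro s i
    have h := (ContinuousLinearMap.proj (R := ℝ) (φ := fun _ : Fin 3 => ℝ)
      i).hasFDerivAt.comp_hasDerivAt s (hB s)
    simp at h; exact h
  have hC' : ∀ (s : ℝ) (i : Fin 3), HasDerivAt (fun s => (x s).2.2 i)
      (-(k₂ s) * (x s).1 i + -(k₁ s) * (x s).2.1 i) s := by
    intro s i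
    have h := (ContinuousLinearMap.proj (R := ℝ) (φ := fun _ : Fin 3 => ℝ)
      i).hasFDerivAt.comp_hasDerivAt s (hC s)
    simp at h; rw [neg_mul, neg_mul]; exact h
  set y : ℝ → Fin 6 → ℝ := fun s =>
    ![eta ((x s).1) ((x s).2.1) - 1, eta ((x s).2.2) ((x s).2.2) - 1,
      eta ((x s).1) ((x s).1), eta ((x s).2.1) ((x s).2.1),
      eta ((x s).1) ((x s).2.2), eta ((x s).2.1) ((x s).2.2)] with hy_def
  have hyc : ∀ (s : ℝ),
      y s 0 = eta ((x s).1) ((x s).2.1) - 1 ∧ y s 1 = eta ((x s).2.2) ((x s).2.2) - 1 ∧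
      y s 2 = eta ((x s).1) ((x s).1) ∧ y s 3 = eta ((x s).2.1) ((x s).2.1) ∧
      y s 4 = eta ((x s).1) ((x s).2.2) ∧ y s 5 = eta ((x s).2.1) ((x s).2.2) :=
    fun s => ⟨rfl, rfl, rfl, rfl, rfl, rfl⟩
  have hyd : ∀ s, HasDerivAt y
      ![k₁ s * y s 5 + k₂ s * y s 4,
        -(2 * k₂ s * y s 4) - 2 * k₁ s * y s 5,
        2 * k₁ s * y s 4,
        2 * k₂ s * y s 5,
        k₁ s * y s 1 - k₂ s * y s 2 - k₁ s * y s 0,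
        k₂ s * y s 1 - k₂ s * y s 0 - k₁ s * y s 3] s := by
    intro s
    obtain ⟨e0, e1, e2, e3, e4, e5⟩ := hyc s
    apply hasDerivAt_pi.2
    intro i
    fin_cases i
    · show HasDerivAt (fun t => eta ((x t).1) ((x t).2.1) - 1) (k₁ s * y s 5 + k₂ s * y s 4) s
      have h := ((((hA' s 0).mul (hB' s 0)).neg.add ((hA' s 1).mul (hB' s 1))).add ((hA' s 2).mul (hB' s 2))).sub_const 1
      refine h.congr_deriv ?_
      rw [e4, e5]
      simp only [eta]
      ring
    · show HasDerivAt (fun t => eta ((x t).2.2) ((x t).2.2) - 1) (-(2 * k₂ s * y s 4) - 2 * k₁ s * y s 5) s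
      have h := ((((hC' s 0).mul (hC' s 0)).neg.add ((hC' s 1).mul (hC' s 1))).add ((hC' s 2).mul (hC' s 2))).sub_const 1
      refine h.congr_deriv ?_
      rw [e4, e5]
      simp only [eta]
      ring
    · show HasDerivAt (fun t => eta ((x t).1) ((x t).1)) (2 * k₁ s * y s 4) s
      have h := (((hA' s 0).mul (hA' s 0)).neg.add ((hA' s 1).mul (hA' s 1))).add ((hA' s 2).mul (hA' s 2))
      refine h.congr_deriv ?_
      rw [e4]
      simp only [eta]
      ring
    · show HasDerivAt (fun t => eta ((x t).2.1) ((x t).2.1)) (2 * k₂ s * y s 5) s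
      have h := (((hB' s 0).mul (hB' s 0)).neg.add ((hB' s 1).mul (hB' s 1))).add ((hB' s 2).mul (hB' s 2))
      refine h.congr_deriv ?_
      rw [e5]
      simp only [eta]
      ring
    · show HasDerivAt (fun t => eta ((x t).1) ((x t).2.2)) (k₁ s * y s 1 - k₂ s * y s 2 - k₁ s * y s 0) s
      have h := (((hA' s 0).mul (hC' s 0)).neg.add ((hA' s 1).mul (hC' s 1))).add ((hA' s 2).mul (hC' s 2))
      refine h.congr_deriv ?_
      rw [e0, e1, e2]
      simp only [eta]
      ring
    · show HasDerivAt (fun t => eta ((x t).2.1) ((x t).2.2)) (k₂ s * y s 1 - k₂ s * y s 0 - k₁ s * y s 3) s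
      have h := (((hB' s 0).mul (hC' s 0)).neg.add ((hB' s 1).mul (hC' s 1))).add ((hB' s 2).mul (hC' s 2))
      refine h.congr_deriv ?_
      rw [e0, e1, e3]
      simp only [eta]
      ring
  have hsqrt : (1 / Real.sqrt 2) * (1 / Real.sqrt 2) = 1 / 2 := by
    rw [div_mul_div_comm, one_mul, Real.mul_self_sqrt (by norm_num : (0:ℝ) ≤ 2)]
  have hsqrt' : (Real.sqrt 2)⁻¹ * (Real.sqrt 2)⁻¹ = 1 / 2 := by
    rw [← one_div]; exact hsqrt
  have hy0 : y 0 = 0 := by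
    obtain ⟨e0, e1, e2, e3, e4, e5⟩ := hyc 0
    rw [hx0] at e0 e1 e2 e3 e4 e5
    funext i
    fin_cases i
    · rw [show (⟨0, by norm_num⟩ : Fin 6) = 0 from rfl, e0]
      simp [eta]
      nlinarith [hsqrt, hsqrt']
    · rw [show (⟨1, by norm_num⟩ : Fin 6) = 1 from rfl, e1]
      simp [eta]
    · rw [show (⟨2, by norm_num⟩ : Fin 6) = 2 from rfl, e2]
      simp [eta]
    · rw [show (⟨3, by norm_num⟩ : Fin 6) = 3 from rfl, e3]
      simp [eta]
    · rw [show (⟨4, by norm_num⟩ : Fin 6) = 4 from rfl, e4]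
      simp [eta]
    · rw [show (⟨5, by norm_num⟩ : Fin 6) = 5 from rfl, e5]
      simp [eta]
  have hyzero : ∀ s, y s = 0 := pair_system_zero k₁ k₂ hk₁ hk₂ y hyd hy0
  refine ⟨fun s => (x s).1, fun s => (x s).2.1, fun s => (x s).2.2,
    fun s => (hA s).differentiableAt, fun s => (hB s).differentiableAt,
    fun s => (hC s).differentiableAt,
    fun s => (hA s).deriv, fun s => (hB s).deriv, fun s => (hC s).deriv,
    ?_, ?_, ?_, ?_⟩
  · show (x 0).1 = _
    rw [hx0]
  · show (x 0).2.1 = _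
    rw [hx0]
  · show (x 0).2.2 = _
    rw [hx0]
  · intro s
    obtain ⟨e0, e1, e2, e3, e4, e5⟩ := hyc s
    have hz := hyzero s
    rw [hz] at e0 e1 e2 e3 e4 e5
    simp only [Pi.zero_apply] at e0 e1 e2 e3 e4 e5
    exact ⟨by linarith, by linarith, by linarith, by linarith, by linarith, by linarith⟩

end
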